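/- For every integer k ≥ 1 there exists a 2-edge-colored graph G = (V, E_red ∪ E_blue) such that both the red subgraph (V, E_red) and the blue subgraph (V, E_blue) are k-edge-connected, yet there is no 2-partition (X,Y) of V for which both the red bipartite subgraph induced by edges between X and Y and the blue bipartite subgraph induced by edges between X and Y are connected spanning subgraphs. -/

import Mathlib

/-- The spanning subgraph of `B` whose edges are the edges of `B` with exactly one
endpoint in `X`. -/
def crossSubgraph {V : Type*} (B : SimpleGraph V) (X : Set V) : SimpleGraph V where
  Adj u v := B.Adj u v ∧ ¬ ((u ∈ X) ↔ (v ∈ X))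
  symm := ⟨fun u v h => ⟨h.1.symm, fun hiff => h.2 hiff.symm⟩⟩
  loopless := ⟨fun v h => h.2 Iff.rfl⟩

/-- `G` is `k`-edge-connected: more than one vertex, and deleting any set of fewer than
`k` edges leaves it connected. -/
def KEdgeConnected {V : Type*} (G : SimpleGraph V) (k : ℕ) : Prop :=
  1 < Nat.card V ∧ ∀ s : Set (Sym2 V), s.ncard < k → (G.deleteEdges s).Connected

section Aux

open SimpleGraph Finset

/-- From a family of pairwise edge-disjoint "channels" indexed by a large finset,
some channel avoids a small edge set. -/
lemma exists_channel {V : Type*} {ι : Type*} (s : Set (Sym2 V)) (hs : s.Finite)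
    {k : ℕ} (hcard : s.ncard < k) (L : Finset ι) (hL : k ≤ L.card)
    (C : ι → Finset (Sym2 V))
    (hdisj : ∀ l ∈ L, ∀ l' ∈ L, l ≠ l' → Disjoint (C l) (C l')) :
    ∃ l ∈ L, ∀ e ∈ C l, e ∉ s := by
  by_contra h
  push_neg at h
  have hL0 : L.Nonempty := Finset.card_pos.mp (by omega)
  have hne : Nonempty (Sym2 V) := ⟨(h hL0.choose hL0.choose_spec).choose⟩
  classical
  have : ∀ l : ι, ∃ e : Sym2 V, l ∈ L → (e ∈ C l ∧ e ∈ s) := by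
    intro l
    by_cases hl : l ∈ L
    · obtain ⟨e, he1, he2⟩ := h l hl
      exact ⟨e, fun _ => ⟨he1, he2⟩⟩
    · exact ⟨hne.some, fun hl' => absurd hl' hl⟩
  choose f hf using this
  have hmaps : ∀ l ∈ L, f l ∈ hs.toFinset := by
    intro l hl
    simpa using (hf l hl).2
  have hcard2 : hs.toFinset.card < L.card := by
    have := Set.ncard_eq_toFinset_card s hs
    omega
  obtain ⟨x, hx, y, hy, hxy, hfxy⟩ :=
    Finset.exists_ne_map_eq_of_card_lt_of_maps_to hcard2 hmaps
  exact Finset.disjoint_left.mp (hdisj x hx y hy hxy) (hf x hx).1 (hfxy ▸ (hf y hy).1)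

/-- The red graph: edges cross the first coordinate, and agree in the second
coordinate or in the third coordinate. -/
def Rg (n : ℕ) : SimpleGraph (Bool × Bool × Fin n) where
  Adj u v := u.1 ≠ v.1 ∧ (u.2.1 = v.2.1 ∨ u.2.2 = v.2.2)
  symm := ⟨by intro u v ⟨h1, h2⟩; exact ⟨h1.symm, h2.imp Eq.symm Eq.symm⟩⟩
  loopless := ⟨fun v h => h.1 rfl⟩

/-- The blue graph: edges cross the second coordinate, and agree in the first
coordinate or disagree in the third coordinate. -/
def Bg (n : ℕ) : SimpleGraph (Bool × Bool × Fin n) where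
  Adj u v := u.2.1 ≠ v.2.1 ∧ (u.1 = v.1 ∨ u.2.2 ≠ v.2.2)
  symm := ⟨by intro u v ⟨h1, h2⟩; exact ⟨h1.symm, h2.imp Eq.symm Ne.symm⟩⟩
  loopless := ⟨fun v h => h.1 rfl⟩

lemma L_card {n : ℕ} (i j : Fin n) :
    n - 2 ≤ ((Finset.univ : Finset (Fin n)) \ {i, j}).card := by
  have h1 : ({i, j} : Finset (Fin n)) ⊆ Finset.univ := Finset.subset_univ _
  rw [Finset.card_sdiff_of_subset h1, Finset.card_univ, Fintype.card_fin]
  have : ({i, j} : Finset (Fin n)).card ≤ 2 :=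
    (Finset.card_insert_le _ _).trans (by simp)
  omega

lemma mem_L {n : ℕ} {i j l : Fin n} (hl : l ∈ (Finset.univ : Finset (Fin n)) \ {i, j}) :
    l ≠ i ∧ l ≠ j := by
  simp only [Finset.mem_sdiff, Finset.mem_univ, Finset.mem_insert, Finset.mem_singleton] at hl
  tauto

lemma Rg_reach (k : ℕ) (s : Set (Sym2 (Bool × Bool × Fin (k + 2))))
    (hcard : s.ncard < k) (u v : Bool × Bool × Fin (k + 2)) :
    ((Rg (k + 2)).deleteEdges s).Reachable u v := by
  classical
  obtain ⟨a, c, i⟩ := u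
  obtain ⟨b, d, j⟩ := v
  by_cases huv : (a, c, i) = (b, d, j)
  · rw [huv]
  set L : Finset (Fin (k + 2)) := Finset.univ \ {i, j} with hLdef
  have hL : k ≤ L.card := by
    have := L_card (n := k + 2) i j; rw [← hLdef] at this; omega
  have hs : s.Finite := Set.toFinite s
  by_cases hab : a = b
  · by_cases hcd : c = d
    · -- same side, same second coordinate; here i ≠ j; paths via (!a, c, l)
      have hij : i ≠ j := by subst hab hcd; simpa using huv
      obtain ⟨l, hl, hfree⟩ := exists_channel s hs hcard L hL
        (fun l => {s((a, c, i), (!a, c, l)), s((!a, c, l), (a, c, j))})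
        (by
          intro l hl l' hl' hne
          obtain ⟨hli, hlj⟩ := mem_L hl
          obtain ⟨hli', hlj'⟩ := mem_L hl'
          simp only [Finset.disjoint_left, Finset.mem_insert, Finset.mem_singleton]
          rintro e (rfl | rfl) h <;>
            simp_all [Sym2.eq_iff, Prod.ext_iff])
      obtain ⟨hli, hlj⟩ := mem_L hl
      subst hab hcd
      have h1 : ((Rg (k + 2)).deleteEdges s).Adj (a, c, i) (!a, c, l) := by
        rw [SimpleGraph.deleteEdges_adj]
        exact ⟨⟨by simp, Or.inl rfl⟩, hfree _ (by simp)⟩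
      have h2 : ((Rg (k + 2)).deleteEdges s).Adj (!a, c, l) (a, c, j) := by
        rw [SimpleGraph.deleteEdges_adj]
        exact ⟨⟨by simp, Or.inl rfl⟩, hfree _ (by simp)⟩
      exact h1.reachable.trans h2.reachable
    · -- same side, different second coordinate: length-4 paths
      obtain ⟨l, hl, hfree⟩ := exists_channel s hs hcard L hL
        (fun l => {s((a, c, i), (!a, c, l)), s((!a, c, l), (a, d, l)),
            s((a, d, l), (!a, d, l)), s((!a, d, l), (b, d, j))})
        (by
          intro l hl l' hl' hne
          obtain ⟨hli, hlj⟩ := mem_L hl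
          obtain ⟨hli', hlj'⟩ := mem_L hl'
          simp only [Finset.disjoint_left, Finset.mem_insert, Finset.mem_singleton]
          rintro e (rfl | rfl | rfl | rfl) h <;>
            simp_all [Sym2.eq_iff, Prod.ext_iff])
      obtain ⟨hli, hlj⟩ := mem_L hl
      subst hab
      have h1 : ((Rg (k + 2)).deleteEdges s).Adj (a, c, i) (!a, c, l) := by
        rw [SimpleGraph.deleteEdges_adj]
        exact ⟨⟨by simp, Or.inl rfl⟩, hfree _ (by simp)⟩
      have h2 : ((Rg (k + 2)).deleteEdges s).Adj (!a, c, l) (a, d, l) := by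
        rw [SimpleGraph.deleteEdges_adj]
        exact ⟨⟨by simp, Or.inr rfl⟩, hfree _ (by simp)⟩
      have h3 : ((Rg (k + 2)).deleteEdges s).Adj (a, d, l) (!a, d, l) := by
        rw [SimpleGraph.deleteEdges_adj]
        exact ⟨⟨by simp, Or.inl rfl⟩, hfree _ (by simp)⟩
      have h4 : ((Rg (k + 2)).deleteEdges s).Adj (!a, d, l) (a, d, j) := by
        rw [SimpleGraph.deleteEdges_adj]
        exact ⟨⟨by simp, Or.inl rfl⟩, hfree _ (by simp)⟩
      exact ((h1.reachable.trans h2.reachable).trans h3.reachable).trans h4.reachable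
  · -- opposite sides: paths u - (b,c,l) - (a,d,l) - v
    obtain ⟨l, hl, hfree⟩ := exists_channel s hs hcard L hL
      (fun l => {s((a, c, i), (b, c, l)), s((b, c, l), (a, d, l)), s((a, d, l), (b, d, j))})
      (by
        intro l hl l' hl' hne
        obtain ⟨hli, hlj⟩ := mem_L hl
        obtain ⟨hli', hlj'⟩ := mem_L hl'
        simp only [Finset.disjoint_left, Finset.mem_insert, Finset.mem_singleton]
        rintro e (rfl | rfl | rfl) h <;>
          simp_all [Sym2.eq_iff, Prod.ext_iff])
    obtain ⟨hli, hlj⟩ := mem_L hl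
    have h1 : ((Rg (k + 2)).deleteEdges s).Adj (a, c, i) (b, c, l) := by
      rw [SimpleGraph.deleteEdges_adj]
      exact ⟨⟨by simpa using hab, Or.inl rfl⟩, hfree _ (by simp)⟩
    have h2 : ((Rg (k + 2)).deleteEdges s).Adj (b, c, l) (a, d, l) := by
      rw [SimpleGraph.deleteEdges_adj]
      exact ⟨⟨by simpa using (Ne.symm hab), Or.inr rfl⟩, hfree _ (by simp)⟩
    have h3 : ((Rg (k + 2)).deleteEdges s).Adj (a, d, l) (b, d, j) := by
      rw [SimpleGraph.deleteEdges_adj]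
      exact ⟨⟨by simpa using hab, Or.inl rfl⟩, hfree _ (by simp)⟩
    exact (h1.reachable.trans h2.reachable).trans h3.reachable

lemma Bg_reach (k : ℕ) (s : Set (Sym2 (Bool × Bool × Fin (k + 2))))
    (hcard : s.ncard < k) (u v : Bool × Bool × Fin (k + 2)) :
    ((Bg (k + 2)).deleteEdges s).Reachable u v := by
  classical
  obtain ⟨a, c, i⟩ := u
  obtain ⟨b, d, j⟩ := v
  by_cases huv : (a, c, i) = (b, d, j)
  · rw [huv]
  set L : Finset (Fin (k + 2)) := Finset.univ \ {i, j} with hLdef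
  have hL : k ≤ L.card := by
    have := L_card (n := k + 2) i j; rw [← hLdef] at this; omega
  have hs : s.Finite := Set.toFinite s
  by_cases hcd : c = d
  · -- same C-side: common neighbors (a, !c, l)
    obtain ⟨l, hl, hfree⟩ := exists_channel s hs hcard L hL
      (fun l => {s((a, c, i), (a, !c, l)), s((a, !c, l), (b, d, j))})
      (by
        intro l hl l' hl' hne
        obtain ⟨hli, hlj⟩ := mem_L hl
        obtain ⟨hli', hlj'⟩ := mem_L hl'
        simp only [Finset.disjoint_left, Finset.mem_insert, Finset.mem_singleton]
        rintro e (rfl | rfl) h <;> simp_all [Sym2.eq_iff, Prod.ext_iff])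
    obtain ⟨hli, hlj⟩ := mem_L hl
    subst hcd
    have h1 : ((Bg (k + 2)).deleteEdges s).Adj (a, c, i) (a, !c, l) := by
      rw [SimpleGraph.deleteEdges_adj]
      exact ⟨⟨by simp, Or.inl rfl⟩, hfree _ (by simp)⟩
    have h2 : ((Bg (k + 2)).deleteEdges s).Adj (a, !c, l) (b, c, j) := by
      rw [SimpleGraph.deleteEdges_adj]
      exact ⟨⟨by simp, Or.inr hlj⟩, hfree _ (by simp)⟩
    exact h1.reachable.trans h2.reachable
  · -- opposite C-sides: paths u - (a,d,l) - (a,c,l) - v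
    obtain ⟨l, hl, hfree⟩ := exists_channel s hs hcard L hL
      (fun l => {s((a, c, i), (a, d, l)), s((a, d, l), (a, c, l)), s((a, c, l), (b, d, j))})
      (by
        intro l hl l' hl' hne
        obtain ⟨hli, hlj⟩ := mem_L hl
        obtain ⟨hli', hlj'⟩ := mem_L hl'
        simp only [Finset.disjoint_left, Finset.mem_insert, Finset.mem_singleton]
        rintro e (rfl | rfl | rfl) h <;> simp_all [Sym2.eq_iff, Prod.ext_iff])
    obtain ⟨hli, hlj⟩ := mem_L hl
    have h1 : ((Bg (k + 2)).deleteEdges s).Adj (a, c, i) (a, d, l) := by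
      rw [SimpleGraph.deleteEdges_adj]
      exact ⟨⟨hcd, Or.inl rfl⟩, hfree _ (by simp)⟩
    have h2 : ((Bg (k + 2)).deleteEdges s).Adj (a, d, l) (a, c, l) := by
      rw [SimpleGraph.deleteEdges_adj]
      exact ⟨⟨Ne.symm hcd, Or.inl rfl⟩, hfree _ (by simp)⟩
    have h3 : ((Bg (k + 2)).deleteEdges s).Adj (a, c, l) (b, d, j) := by
      rw [SimpleGraph.deleteEdges_adj]
      exact ⟨⟨hcd, Or.inr hlj⟩, hfree _ (by simp)⟩
    exact (h1.reachable.trans h2.reachable).trans h3.reachable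

lemma reach_inv {V : Type*} (G : SimpleGraph V) (P : V → Prop)
    (h : ∀ u v, G.Adj u v → (P u ↔ P v)) :
    ∀ u v, G.Reachable u v → (P u ↔ P v) := by
  intro u v hr
  obtain ⟨w⟩ := hr
  induction w with
  | nil => exact Iff.rfl
  | cons ha _ ih => exact (h _ _ ha).trans ih

end Aux

/-- For every `k ≥ 1` there is a 2-edge-colored graph whose red and blue subgraphs are
both `k`-edge-connected but which has no 2-partition whose red and blue crossing
subgraphs are both connected. -/
theorem stmt_13 (k : ℕ) (hk : 1 ≤ k) :
    ∃ (V : Type) (_ : Fintype V) (R B : SimpleGraph V),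
      (∀ u v : V, ¬ (R.Adj u v ∧ B.Adj u v)) ∧
      KEdgeConnected R k ∧ KEdgeConnected B k ∧
      ¬ ∃ X : Set V, (crossSubgraph R X).Connected ∧ (crossSubgraph B X).Connected := by
  classical
  have hn : 0 < k + 2 := by omega
  refine ⟨Bool × Bool × Fin (k + 2), inferInstance, Rg (k + 2), Bg (k + 2), ?_, ?_, ?_, ?_⟩
  · rintro u v ⟨⟨h1, h2⟩, ⟨h3, h4⟩⟩
    tauto
  · refine ⟨?_, fun s hs => ⟨fun u v => Rg_reach k s hs u v⟩⟩
    simp [Nat.card_eq_fintype_card]; omega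
  · refine ⟨?_, fun s hs => ⟨fun u v => Bg_reach k s hs u v⟩⟩
    simp [Nat.card_eq_fintype_card]; omega
  · rintro ⟨X, hR, hB⟩
    set v1 : Bool × Bool × Fin (k + 2) := (true, true, ⟨0, hn⟩) with hv1
    set v2 : Bool × Bool × Fin (k + 2) := (true, false, ⟨0, hn⟩) with hv2
    have hP := reach_inv (crossSubgraph (Rg (k + 2)) X) (fun v => (v.1 = true ↔ v ∈ X))
      (by
        rintro u v ⟨⟨h1, _⟩, hflip⟩
        constructor <;> intro hiff <;> constructor <;> intro hh <;>
          rcases hu1 : u.1 <;> rcases hv1' : v.1 <;> simp_all)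
      v1 v2 (hR.preconnected v1 v2)
    have hQ := reach_inv (crossSubgraph (Bg (k + 2)) X) (fun v => (v.2.1 = true ↔ v ∈ X))
      (by
        rintro u v ⟨⟨h1, _⟩, hflip⟩
        constructor <;> intro hiff <;> constructor <;> intro hh <;>
          rcases hu1 : u.2.1 <;> rcases hv1' : v.2.1 <;> simp_all)
      v1 v2 (hB.preconnected v1 v2)
    simp only [hv1, hv2] at hP hQ
    simp at hP hQ
    tauto
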